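/- For every integer m, every positive integer n, and every integer s, there exists a non-square integer D ≥ 2 such that D ≡ m (mod n) and every universal quadratic form over ℤ[√D] has at least s variables. -/

import Mathlib

/-- An element `z = z.re + z.im * √d` of `ℤ[√d]` is totally positive if both it
and its conjugate `z.re - z.im * √d` are positive (as real numbers). -/
def TotPos (d : ℤ) (z : Zsqrtd d) : Prop :=
  0 < (z.re : ℝ) + (z.im : ℝ) * Real.sqrt d ∧
    0 < (z.re : ℝ) - (z.im : ℝ) * Real.sqrt d

/-- The value of the quadratic form `∑_{i ≤ j} c i j * x i * x j` in `r`
variables over `ℤ[√d]` with coefficients `c`. -/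
def QFval (d : ℤ) {r : ℕ} (c : Fin r → Fin r → Zsqrtd d)
    (x : Fin r → Zsqrtd d) : Zsqrtd d :=
  ∑ i : Fin r, ∑ j : Fin r, if i ≤ j then c i j * x i * x j else 0

/-- The quadratic form with coefficients `c` is totally positive: it takes
totally positive values on all nonzero tuples. -/
def IsTotPosForm (d : ℤ) {r : ℕ} (c : Fin r → Fin r → Zsqrtd d) : Prop :=
  ∀ x : Fin r → Zsqrtd d, x ≠ 0 → TotPos d (QFval d c x)

/-- The quadratic form with coefficients `c` is universal over `ℤ[√d]`: it is
totally positive and represents every totally positive element of `ℤ[√d]`. -/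
def IsUniversal (d : ℤ) {r : ℕ} (c : Fin r → Fin r → Zsqrtd d) : Prop :=
  IsTotPosForm d c ∧ ∀ z : Zsqrtd d, TotPos d z → ∃ x, QFval d c x = z

open Finset

/-- The polar pair value of the form. -/
def QFpair (d : ℤ) {r : ℕ} (c : Fin r → Fin r → Zsqrtd d)
    (x y : Fin r → Zsqrtd d) : Zsqrtd d :=
  ∑ i : Fin r, ∑ j : Fin r, if i ≤ j then c i j * (x i * y j + x j * y i) else 0

lemma QFval_zero (d : ℤ) {r : ℕ} (c : Fin r → Fin r → Zsqrtd d) :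
    QFval d c 0 = 0 := by
  simp [QFval]

lemma QFpair_self (d : ℤ) {r : ℕ} (c : Fin r → Fin r → Zsqrtd d) (x : Fin r → Zsqrtd d) :
    QFpair d c x x = 2 * QFval d c x := by
  rw [QFval, QFpair, mul_sum]
  refine Finset.sum_congr rfl fun i _ => ?_
  rw [mul_sum]
  refine Finset.sum_congr rfl fun j _ => ?_
  split_ifs <;> ring

lemma QFval_expand (d : ℤ) {r : ℕ} (c : Fin r → Fin r → Zsqrtd d)
    (x y : Fin r → Zsqrtd d) (q p : ℤ) :
    QFval d c (fun i => (q : Zsqrtd d) * x i + (p : Zsqrtd d) * y i)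
      = (q : Zsqrtd d)^2 * QFval d c x + (q : Zsqrtd d) * p * QFpair d c x y
        + (p : Zsqrtd d)^2 * QFval d c y := by
  rw [QFval, QFval, QFval, QFpair, mul_sum, mul_sum, mul_sum, ← sum_add_distrib,
    ← sum_add_distrib]
  refine Finset.sum_congr rfl fun i _ => ?_
  rw [mul_sum, mul_sum, mul_sum, ← sum_add_distrib, ← sum_add_distrib]
  refine Finset.sum_congr rfl fun j _ => ?_
  split_ifs <;> ring

/-- auxiliary real "polar form" -/
def TR {r : ℕ} (C : Fin r → Fin r → ℝ) (x y : Fin r → ℝ) : ℝ :=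
  ∑ i : Fin r, ∑ j : Fin r, if i ≤ j then C i j * (x i * y j + x j * y i) else 0

lemma TR_map (d : ℤ) {r : ℕ} (f : Zsqrtd d →+* ℝ) (c : Fin r → Fin r → Zsqrtd d)
    (x y : Fin r → Zsqrtd d) :
    f (QFpair d c x y)
      = TR (fun i j => f (c i j)) (fun i => f (x i)) (fun i => f (y i)) := by
  rw [QFpair, TR, map_sum]
  refine Finset.sum_congr rfl fun i _ => ?_
  rw [map_sum]
  refine Finset.sum_congr rfl fun j _ => ?_
  rw [apply_ite f, map_zero, map_mul, map_add, map_mul, map_mul]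

lemma TR_smul_sum {t r : ℕ} (C : Fin r → Fin r → ℝ) (x : Fin t → Fin r → ℝ)
    (g : Fin t → ℝ) (y : Fin r → ℝ) :
    TR C (∑ k : Fin t, g k • x k) y = ∑ k : Fin t, g k * TR C (x k) y := by
  rw [TR]
  have : ∀ a b : Fin r,
      (if a ≤ b then C a b * ((∑ k : Fin t, g k • x k) a * y b
          + (∑ k : Fin t, g k • x k) b * y a) else 0)
        = ∑ k : Fin t, (if a ≤ b then g k * (C a b * (x k a * y b + x k b * y a)) else 0) := by
    intro a b
    split_ifs with h
    · rw [Finset.sum_apply, Finset.sum_apply, Finset.sum_mul, Finset.sum_mul,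
        ← sum_add_distrib, Finset.mul_sum]
      refine Finset.sum_congr rfl fun k _ => ?_
      simp only [Pi.smul_apply, smul_eq_mul]
      ring
    · rw [Finset.sum_const_zero]
  calc (∑ i : Fin r, ∑ j : Fin r, if i ≤ j then C i j * ((∑ k : Fin t, g k • x k) i * y j
          + (∑ k : Fin t, g k • x k) j * y i) else 0)
      = ∑ i : Fin r, ∑ j : Fin r, ∑ k : Fin t,
          (if i ≤ j then g k * (C i j * (x k i * y j + x k j * y i)) else 0) := by
        exact Finset.sum_congr rfl fun i _ => Finset.sum_congr rfl fun j _ => this i j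
    _ = ∑ k : Fin t, ∑ i : Fin r, ∑ j : Fin r,
          (if i ≤ j then g k * (C i j * (x k i * y j + x k j * y i)) else 0) := by
        rw [show (∑ i : Fin r, ∑ j : Fin r, ∑ k : Fin t,
            (if i ≤ j then g k * (C i j * (x k i * y j + x k j * y i)) else 0))
          = ∑ i : Fin r, ∑ k : Fin t, ∑ j : Fin r,
            (if i ≤ j then g k * (C i j * (x k i * y j + x k j * y i)) else 0) from
          Finset.sum_congr rfl fun i _ => Finset.sum_comm]
        exact Finset.sum_comm
    _ = ∑ k : Fin t, g k * TR C (x k) y := by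
        refine Finset.sum_congr rfl fun k _ => ?_
        rw [TR, Finset.mul_sum]
        refine Finset.sum_congr rfl fun i _ => ?_
        rw [Finset.mul_sum]
        refine Finset.sum_congr rfl fun j _ => ?_
        split_ifs <;> simp

lemma key_discrim {A B E : ℝ} (h : ∀ q p : ℤ, 0 ≤ A * q^2 + B * (q * p) + E * p^2) :
    B^2 ≤ 4 * (A * E) := by
  have hQ : ∀ x : ℚ, 0 ≤ A * ((x:ℝ) * x) + B * x + E := by
    intro x
    have hden : (0:ℝ) < (x.den : ℝ) := by exact_mod_cast x.pos
    have hx : (x : ℝ) = (x.num : ℝ) / (x.den : ℝ) := Rat.cast_def x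
    have h1 := h x.num x.den
    have h2 : 0 ≤ (A * ((x:ℝ) * x) + B * x + E) * ((x.den:ℝ)^2) := by
      rw [hx]
      calc (0:ℝ) ≤ A * (x.num:ℝ)^2 + B * ((x.num:ℝ) * (x.den:ℝ)) + E * (x.den:ℝ)^2 := by
            exact_mod_cast h1
        _ = ((A * ((x.num:ℝ)/(x.den:ℝ) * ((x.num:ℝ)/(x.den:ℝ)))
              + B * ((x.num:ℝ)/(x.den:ℝ)) + E) * ((x.den:ℝ)^2)) := by
            field_simp
    nlinarith [h2, mul_pos hden hden]
  have hR : ∀ x : ℝ, 0 ≤ A * (x * x) + B * x + E := by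
    have hcont : Continuous fun x : ℝ => A * (x * x) + B * x + E := by continuity
    have hcl : IsClosed {x : ℝ | 0 ≤ A * (x * x) + B * x + E} :=
      isClosed_le continuous_const hcont
    intro x
    have hsub : Set.range ((↑) : ℚ → ℝ) ⊆ {x : ℝ | 0 ≤ A * (x * x) + B * x + E} := by
      rintro _ ⟨q, rfl⟩; exact hQ q
    have hx : x ∈ closure (Set.range ((↑) : ℚ → ℝ)) := by
      rw [Rat.denseRange_cast.closure_eq]; trivial
    exact hcl.closure_subset_iff.mpr hsub hx
  have := discrim_le_zero hR
  rw [discrim] at this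
  nlinarith [this]


lemma rank_lower_bound (D : ℤ) (hD0 : (0:ℝ) ≤ (D:ℝ)) {t r : ℕ}
    (c : Fin r → Fin r → Zsqrtd D) (hu : IsUniversal D c)
    (α : Fin t → Zsqrtd D) (hα : ∀ k, TotPos D (α k))
    (H : ∀ k l : Fin t, k ≠ l → ∀ β : Zsqrtd D,
      ((β.re:ℝ) + (β.im:ℝ) * Real.sqrt D)^2
        ≤ 4 * ((((α k).re:ℝ) + ((α k).im:ℝ) * Real.sqrt D)
            * (((α l).re:ℝ) + ((α l).im:ℝ) * Real.sqrt D)) →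
      ((β.re:ℝ) - (β.im:ℝ) * Real.sqrt D)^2
        ≤ 4 * ((((α k).re:ℝ) - ((α k).im:ℝ) * Real.sqrt D)
            * (((α l).re:ℝ) - ((α l).im:ℝ) * Real.sqrt D)) →
      β = 0) :
    t ≤ r := by
  classical
  set ρ : ℝ := Real.sqrt D with hρdef
  have hρ : ρ * ρ = (D:ℝ) := Real.mul_self_sqrt hD0
  have hρ' : (-ρ) * (-ρ) = (D:ℝ) := by rw [neg_mul_neg]; exact hρ
  set fp : Zsqrtd D →+* ℝ := Zsqrtd.lift ⟨ρ, hρ⟩ with hfpdef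
  set fm : Zsqrtd D →+* ℝ := Zsqrtd.lift ⟨-ρ, hρ'⟩ with hfmdef
  have hfp : ∀ z : Zsqrtd D, fp z = (z.re:ℝ) + (z.im:ℝ) * ρ := by
    intro z; simp [hfpdef, Zsqrtd.lift]
  have hfm : ∀ z : Zsqrtd D, fm z = (z.re:ℝ) - (z.im:ℝ) * ρ := by
    intro z; simp [hfmdef, Zsqrtd.lift]; ring
  -- choose representing vectors
  have hrep : ∀ k : Fin t, ∃ v : Fin r → Zsqrtd D, QFval D c v = α k :=
    fun k => hu.2 (α k) (hα k)
  choose v hv using hrep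
  -- nonnegativity of values under both embeddings
  have hnnp : ∀ x : Fin r → Zsqrtd D, 0 ≤ fp (QFval D c x) := by
    intro x
    by_cases hx : x = 0
    · rw [hx, QFval_zero, map_zero]
    · have := (hu.1 x hx).1
      rw [hfp]; exact le_of_lt this
  have hnnm : ∀ x : Fin r → Zsqrtd D, 0 ≤ fm (QFval D c x) := by
    intro x
    by_cases hx : x = 0
    · rw [hx, QFval_zero, map_zero]
    · have := (hu.1 x hx).2
      rw [hfm]; exact le_of_lt this
  -- Cauchy-Schwarz type bound for both embeddings
  have hCS : ∀ (f : Zsqrtd D →+* ℝ), (∀ x : Fin r → Zsqrtd D, 0 ≤ f (QFval D c x)) →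
      ∀ k l : Fin t,
      (f (QFpair D c (v k) (v l)))^2 ≤ 4 * (f (α k) * f (α l)) := by
    intro f hf k l
    apply key_discrim
    intro q p
    have := hf (fun i => (q : Zsqrtd D) * v k i + (p : Zsqrtd D) * v l i)
    rw [QFval_expand] at this
    rw [map_add, map_add, map_mul, map_mul, map_mul, map_mul] at this
    simp only [map_pow, map_intCast, hv] at this
    calc (0:ℝ) ≤ (q:ℝ)^2 * f (α k) + (q:ℝ) * (p:ℝ) * f (QFpair D c (v k) (v l))
        + (p:ℝ)^2 * f (α l) := this
      _ = f (α k) * (q:ℝ)^2 + f (QFpair D c (v k) (v l)) * ((q:ℝ) * (p:ℝ))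
        + f (α l) * (p:ℝ)^2 := by ring
  -- pairwise vanishing
  have hpair : ∀ k l : Fin t, k ≠ l → QFpair D c (v k) (v l) = 0 := by
    intro k l hkl
    refine H k l hkl _ ?_ ?_
    · have := hCS fp hnnp k l
      rw [hfp, hfp, hfp] at this
      exact this
    · have := hCS fm hnnm k l
      rw [hfm, hfm, hfm] at this
      exact this
  -- linear independence of the images
  set w : Fin t → (Fin r → ℝ) := fun k i => fp (v k i) with hwdef
  set C : Fin r → Fin r → ℝ := fun i j => fp (c i j) with hCdef
  have hTw : ∀ k l : Fin t, TR C (w k) (w l) = fp (QFpair D c (v k) (v l)) := by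
    intro k l
    rw [TR_map]
  have hli : LinearIndependent ℝ w := by
    rw [Fintype.linearIndependent_iff]
    intro g hg k
    have h0 : TR C (∑ l : Fin t, g l • w l) (w k) = 0 := by
      rw [hg]; simp [TR]
    rw [TR_smul_sum] at h0
    rw [Finset.sum_eq_single k (fun l _ hlk => by
        rw [hTw, hpair l k hlk, map_zero, mul_zero]) (fun h => absurd (mem_univ k) h)] at h0
    have hwk : TR C (w k) (w k) = 2 * fp (α k) := by
      rw [hTw, QFpair_self, map_mul, hv, map_ofNat]
    rw [hwk] at h0
    have hpos : 0 < fp (α k) := by rw [hfp]; exact (hα k).1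
    have : g k * (2 * fp (α k)) = 0 := h0
    rcases mul_eq_zero.mp this with h | h
    · exact h
    · exfalso; nlinarith
  have := hli.fintype_card_le_finrank
  simpa [Module.finrank_fin_fun] using this

/-! ### Numeric infrastructure -/

def gg (k : ℕ) : ℕ := 4^(k+3)

lemma gg_pos (k : ℕ) : 64 ≤ gg k := by
  have : (4:ℕ)^3 ≤ 4^(k+3) := Nat.pow_le_pow_right (by norm_num) (by omega)
  simpa [gg] using this

lemma gg_mono : Monotone gg := by
  intro p q h
  exact Nat.pow_le_pow_right (by norm_num) (by omega)

lemma gg_succ (k : ℕ) : gg (k+1) = 4 * gg k := by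
  simp [gg, pow_succ]; ring

lemma gg_gap {p q : ℕ} (h : p ≤ q) : gg p + (q - p) ≤ gg q := by
  have h1 : gg q = gg p * 4^(q-p) := by
    rw [gg, gg, ← pow_add]
    congr 1; omega
  have h2 : q - p < 4^(q-p) := Nat.lt_pow_self (by norm_num)
  have h3 : 1 ≤ gg p := le_trans (by norm_num) (gg_pos p)
  calc gg p + (q - p) ≤ gg p + gg p * (q - p) := by nlinarith
    _ = gg p * (1 + (q-p)) := by ring
    _ ≤ gg p * 4^(q-p) := by
        exact Nat.mul_le_mul_left _ (by omega)
    _ = gg q := h1.symm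

lemma pow2_le {a b : ℕ} (h : a ≤ b) : (2:ℝ)^a ≤ 2^b :=
  pow_le_pow_right₀ one_le_two h

lemma inv2_le {a b : ℕ} (h : a ≤ b) : ((2:ℝ)^b)⁻¹ ≤ ((2:ℝ)^a)⁻¹ :=
  inv_anti₀ (by positivity) (pow2_le h)

lemma pow2_mul_inv_le {a b c : ℕ} (h : a + c ≤ b) :
    (2:ℝ)^a * ((2:ℝ)^b)⁻¹ ≤ ((2:ℝ)^c)⁻¹ := by
  have h1 : (2:ℝ)^a * 2^c ≤ 2^b := by rw [← pow_add]; exact pow2_le h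
  have h2 : (0:ℝ) < 2^b := by positivity
  have h3 : (0:ℝ) < 2^c := by positivity
  have h4 : (2:ℝ)^a / 2^b ≤ 1 / 2^c :=
    (div_le_div_iff₀ h2 h3).mpr (by rw [one_mul]; exact h1)
  simpa [div_eq_mul_inv] using h4

lemma abs_le_of_sq {x y : ℝ} (h : x^2 ≤ y^2) (hy : 0 ≤ y) : |x| ≤ y := by
  have := Real.sqrt_le_sqrt h
  rwa [Real.sqrt_sq_eq_abs, Real.sqrt_sq hy] at this

lemma geom_tail (p t : ℕ) :
    ∑ ν ∈ Finset.Ioc p t, ((2:ℝ)^(gg ν))⁻¹ ≤ 2 * ((2:ℝ)^(gg (p+1)))⁻¹ := by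
  have h1 : ∀ ν ∈ Finset.Ioc p t, ((2:ℝ)^(gg ν))⁻¹
      ≤ ((2:ℝ)^(gg (p+1)))⁻¹ * (1/2)^(ν - (p+1)) := by
    intro ν hν
    rw [Finset.mem_Ioc] at hν
    have hg : gg (p+1) + (ν - (p+1)) ≤ gg ν := gg_gap (by omega)
    have : ((2:ℝ)^(gg ν))⁻¹ ≤ ((2:ℝ)^(gg (p+1) + (ν - (p+1))))⁻¹ := inv2_le hg
    calc ((2:ℝ)^(gg ν))⁻¹ ≤ ((2:ℝ)^(gg (p+1) + (ν - (p+1))))⁻¹ := this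
      _ = ((2:ℝ)^(gg (p+1)))⁻¹ * (1/2)^(ν - (p+1)) := by
          rw [pow_add, mul_inv]
          congr 1
          rw [one_div, inv_pow]
  calc ∑ ν ∈ Finset.Ioc p t, ((2:ℝ)^(gg ν))⁻¹
      ≤ ∑ ν ∈ Finset.Ioc p t, ((2:ℝ)^(gg (p+1)))⁻¹ * (1/2)^(ν - (p+1)) :=
        Finset.sum_le_sum h1
    _ = ((2:ℝ)^(gg (p+1)))⁻¹ * ∑ ν ∈ Finset.Ioc p t, (1/2)^(ν - (p+1)) := by
        rw [Finset.mul_sum]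
    _ ≤ ((2:ℝ)^(gg (p+1)))⁻¹ * 2 := by
        have hpos : (0:ℝ) ≤ ((2:ℝ)^(gg (p+1)))⁻¹ := by positivity
        refine mul_le_mul_of_nonneg_left ?_ hpos
        rw [← Finset.Icc_add_one_left_eq_Ioc, ← Finset.Ico_add_one_right_eq_Icc, Finset.sum_Ico_eq_sum_range]
        have : ∀ i ∈ Finset.range (t + 1 - (p+1)), ((1:ℝ)/2)^(p+1+i-(p+1)) = (1/2)^i := by
          intro i _; congr 1; omega
        rw [Finset.sum_congr rfl this]
        exact sum_geometric_two_le _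
    _ = 2 * ((2:ℝ)^(gg (p+1)))⁻¹ := by ring

lemma no_two_sq {N x : ℤ} (hN : 0 < N) (hx : N^2 < x) (h1 : IsSquare x)
    (h2 : IsSquare (x + N)) : False := by
  obtain ⟨u, hu⟩ := h1
  obtain ⟨w, hw⟩ := h2
  set U := |u| with hU
  set V := |w| with hV
  have hU0 : 0 ≤ U := abs_nonneg u
  have hV0 : 0 ≤ V := abs_nonneg w
  have hUu : U * U = x := by rw [hU, abs_mul_abs_self]; exact hu.symm
  have hVw : V * V = x + N := by rw [hV, abs_mul_abs_self]; exact hw.symm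
  have hUN : N < U := by nlinarith
  have hVU : U < V := by nlinarith
  have : V ≤ U := by nlinarith
  omega

set_option maxHeartbeats 8000000 in
/-- For every integer `m`, positive integer `n` and integer `s`, there is a
non-square `D ≥ 2` with `D ≡ m (mod n)` such that every universal quadratic form
over `ℤ[√D]` has at least `s` variables. -/
theorem exists_large_rank_universal_mod (m : ℤ) (n : ℕ) (hn : 0 < n) (s : ℤ) :
    ∃ D : ℤ, 2 ≤ D ∧ ¬ IsSquare D ∧ D ≡ m [ZMOD (n : ℤ)] ∧
      ∀ (r : ℕ) (c : Fin r → Fin r → Zsqrtd D), IsUniversal D c → s ≤ (r : ℤ) := by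
  classical
  set t : ℕ := s.toNat + 1 with ht
  set E : ℕ := gg (t+1) with hE
  set θ : ℝ := ((2:ℝ)^E)⁻¹ with hθ
  set Wn : ℕ := (3*n+2) * 2^E with hWn
  set S : ℕ → ℝ := fun p => ∑ ν ∈ Finset.Ioc p t, ((2:ℝ)^(gg ν))⁻¹ with hS
  set Rr : ℝ := (Wn:ℝ) - S 0 with hRrdef
  have hn1 : (1:ℝ) ≤ (n:ℝ) := by exact_mod_cast hn
  have hθpos : 0 < θ := by rw [hθ]; positivity
  have hSnn : ∀ p, 0 ≤ S p := by
    intro p; rw [hS]; positivity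
  have hSle : ∀ p, S p ≤ 2 * ((2:ℝ)^(gg (p+1)))⁻¹ := fun p => geom_tail p t
  have hS0le : S 0 ≤ 1 := by
    refine le_trans (hSle 0) ?_
    have h1 : ((2:ℝ)^(gg 1))⁻¹ ≤ ((2:ℝ)^(1:ℕ))⁻¹ := inv2_le (le_trans (by norm_num) (gg_pos 1))
    rw [pow_one] at h1
    linarith
  have hSsub : ∀ p, S p ≤ S 0 := by
    intro p
    rw [hS]
    refine Finset.sum_le_sum_of_subset_of_nonneg ?_ (fun i _ _ => by positivity)
    exact Finset.Ioc_subset_Ioc (Nat.zero_le p) le_rfl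
  have hWnR : ((Wn:ℕ):ℝ) = (3*(n:ℝ)+2) * 2^E := by rw [hWn]; push_cast; ring
  have hWθ : (Wn:ℝ) * θ = 3*(n:ℝ)+2 := by
    rw [hWnR, hθ, mul_assoc, mul_inv_cancel₀ (by positivity), mul_one]
  have h2E : (4:ℝ) ≤ 2^E := by
    have : (2:ℝ)^(2:ℕ) ≤ 2^E := pow2_le (le_trans (by norm_num) (gg_pos (t+1)))
    norm_num at this; exact this
  have hθ1 : θ ≤ 1/4 := by
    rw [hθ]
    rw [show (1:ℝ)/4 = ((2:ℝ)^(2:ℕ))⁻¹ by norm_num]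
    exact inv2_le (le_trans (by norm_num) (gg_pos (t+1)))
  have hWnge : 12*(n:ℝ) + 8 ≤ (Wn:ℝ) := by rw [hWnR]; nlinarith only [hn1, h2E]
  have hRr1 : (Wn:ℝ) - 1 ≤ Rr := by rw [hRrdef]; linarith
  have hRr2 : Rr ≤ (Wn:ℝ) := by rw [hRrdef]; linarith [hSnn 0]
  clear_value t E θ Wn S Rr
  set lo : ℝ := (Rr - θ)^2 with hlo
  set hi : ℝ := (Rr - θ/2)^2 with hhi
  clear_value lo hi
  have hRθ : 3*(n:ℝ) + 2 ≤ Rr - θ := by linarith only [hRr1, hWnge, hθ1, hn1]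
  have hWm2 : (Wn:ℝ) - 2 ≤ Rr - θ := by linarith only [hRr1, hθ1, hθpos]
  have hhilo : lo + 2*(n:ℝ) ≤ hi := by
    rw [hlo, hhi]
    have hRrθ : (3:ℝ)*n + 1 ≤ Rr * θ := by
      have : ((Wn:ℝ) - 1) * θ ≤ Rr * θ := mul_le_mul_of_nonneg_right hRr1 (le_of_lt hθpos)
      linarith only [this, hWθ, hθ1, hθpos]
    have hθsq : θ^2 ≤ 1 := by nlinarith only [hθ1, hθpos]
    have expand : (Rr - θ/2)^2 - ((Rr - θ)^2) = Rr*θ - 3/4*θ^2 := by ring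
    linarith only [hRrθ, hθsq, hn1, expand]
  -- the integer D
  obtain ⟨D, hDlo, hDhi, hDmod, hDnsq⟩ :
      ∃ D : ℤ, lo ≤ (D:ℝ) ∧ (D:ℝ) ≤ hi ∧ D ≡ m [ZMOD (n:ℤ)] ∧ ¬ IsSquare D := by
    set c0 : ℤ := ⌈(lo - (m:ℝ))/(n:ℝ)⌉ with hc0
    set x0 : ℤ := m + n * c0 with hx0
    have hnR : (0:ℝ) < (n:ℝ) := by positivity
    have hx0lo : lo ≤ (x0:ℝ) := by
      have h1 : (lo - (m:ℝ))/(n:ℝ) ≤ (c0:ℝ) := Int.le_ceil _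
      rw [div_le_iff₀ hnR] at h1
      rw [hx0]; push_cast; linarith only [h1]
    have hx0hi : (x0:ℝ) ≤ lo + n := by
      have h1 : (c0:ℝ) < (lo - (m:ℝ))/(n:ℝ) + 1 := Int.ceil_lt_add_one _
      rw [hx0]; push_cast
      have h2 : (c0:ℝ) * n < (lo - m)/n * n + n := by
        have := mul_lt_mul_of_pos_right h1 hnR
        linarith only [this]
      rw [div_mul_cancel₀ _ (ne_of_gt hnR)] at h2
      linarith only [h2]
    have hlon : ((n:ℝ))^2 + 1 ≤ lo := by
      rw [hlo]; nlinarith only [hRθ, hn1]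
    have hn2x0 : ((n:ℤ))^2 < x0 := by
      have : ((n:ℝ))^2 < (x0:ℝ) := by linarith only [hlon, hx0lo]
      exact_mod_cast this
    have hmodx0 : x0 ≡ m [ZMOD (n:ℤ)] := by
      have h : (n:ℤ) ∣ m - x0 := ⟨-c0, by rw [hx0]; ring⟩
      exact Int.modEq_iff_dvd.mpr h
    clear_value c0 x0
    by_cases hsq : IsSquare x0
    · refine ⟨x0 + n, ?_, ?_, ?_, ?_⟩
      · push_cast; linarith
      · push_cast; linarith
      · have h : (n:ℤ) ∣ m - (x0 + n) := ⟨-c0 - 1, by rw [hx0]; ring⟩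
        exact Int.modEq_iff_dvd.mpr h
      · intro h2
        exact no_two_sq (by exact_mod_cast hn) hn2x0 hsq h2
    · exact ⟨x0, hx0lo, by linarith, hmodx0, hsq⟩
  have hD2 : 2 ≤ D := by
    have h25 : (25:ℝ) ≤ lo := by rw [hlo]; nlinarith only [hRθ, hn1]
    have : (2:ℝ) ≤ (D:ℝ) := by linarith only [h25, hDlo]
    exact_mod_cast this
  have hD0 : (0:ℝ) ≤ ((D:ℤ):ℝ) := by
    have : (2:ℝ) ≤ (D:ℝ) := by exact_mod_cast hD2
    linarith
  set ρ : ℝ := Real.sqrt ((D:ℤ):ℝ) with hρdef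
  have hRθ0 : (0:ℝ) ≤ Rr - θ := by linarith
  have hρlo : Rr - θ ≤ ρ := by
    rw [hρdef, show Rr - θ = Real.sqrt lo by rw [hlo, Real.sqrt_sq hRθ0]]
    exact Real.sqrt_le_sqrt hDlo
  have hρhi : ρ ≤ Rr - θ/2 := by
    rw [hρdef, show Rr - θ/2 = Real.sqrt hi by rw [hhi, Real.sqrt_sq (by linarith)]]
    exact Real.sqrt_le_sqrt hDhi
  have hρsq : ρ^2 = ((D:ℤ):ℝ) := Real.sq_sqrt hD0
  clear_value ρ
  have hρpos : (0:ℝ) < ρ := by linarith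
  have hρWn : ρ ≤ (Wn:ℝ) := by linarith
  have hWρ : (Wn:ℝ) - 2 ≤ ρ := by linarith
  have hWn20 : (20:ℝ) ≤ (Wn:ℝ) := by linarith
  -- the elements α
  set aZ : ℕ → ℤ := fun K => 2^(gg K) * (Wn:ℤ) - ∑ ν ∈ Finset.Ioc 0 K, 2^(gg K - gg ν)
    with haZ
  clear_value aZ
  have hsumcast : ∀ K : ℕ, ((∑ ν ∈ Finset.Ioc 0 K, (2:ℤ)^(gg K - gg ν) : ℤ) : ℝ)
      = 2^(gg K) * ∑ ν ∈ Finset.Ioc 0 K, ((2:ℝ)^(gg ν))⁻¹ := by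
    intro K
    push_cast
    rw [Finset.mul_sum]
    refine Finset.sum_congr rfl fun ν hν => ?_
    rw [Finset.mem_Ioc] at hν
    have hgle : gg ν ≤ gg K := gg_mono hν.2
    have hh : (2:ℝ)^(gg K - gg ν) * 2^(gg ν) = 2^(gg K) := by
      rw [← pow_add]; congr 1; omega
    field_simp [← hh]
    exact hh
  have hacast : ∀ K, 1 ≤ K → K ≤ t → (aZ K : ℝ) = 2^(gg K) * (Rr + S K) := by
    intro K h1 h2
    have hcast : ((aZ K : ℤ):ℝ) = (2:ℝ)^(gg K) * (Wn:ℝ)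
        - ((∑ ν ∈ Finset.Ioc 0 K, (2:ℤ)^(gg K - gg ν) : ℤ):ℝ) := by
      rw [haZ]; push_cast; ring
    have hsplit : (∑ ν ∈ Finset.Ioc 0 K, ((2:ℝ)^(gg ν))⁻¹) + S K = S 0 := by
      simp only [hS]
      exact Finset.sum_Ioc_consecutive _ (Nat.zero_le K) h2
    rw [hcast, hsumcast, hRrdef,
      show (∑ ν ∈ Finset.Ioc 0 K, ((2:ℝ)^(gg ν))⁻¹) = S 0 - S K by linarith]
    ring
  have hδlb : ∀ K, 1 ≤ K → K ≤ t → (2:ℝ)^(gg K) * (θ/2) ≤ (aZ K:ℝ) - 2^(gg K) * ρ := by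
    intro K h1 h2
    rw [hacast K h1 h2]
    have h3 : θ/2 ≤ Rr - ρ := by linarith
    have h4 : (0:ℝ) ≤ S K := hSnn K
    have h5 : (0:ℝ) < (2:ℝ)^(gg K) := by positivity
    nlinarith only [h3, h4, h5]
  have hδub : ∀ K, 1 ≤ K → K ≤ t →
      (aZ K:ℝ) - 2^(gg K) * ρ ≤ 2^(gg K) * (4 * ((2:ℝ)^(gg (K+1)))⁻¹) := by
    intro K h1 h2
    rw [hacast K h1 h2]
    have h3 : Rr - ρ ≤ θ := by linarith
    have h4 : S K ≤ 2 * ((2:ℝ)^(gg (K+1)))⁻¹ := hSle K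
    have h5 : (0:ℝ) < (2:ℝ)^(gg K) := by positivity
    have h6 : θ ≤ ((2:ℝ)^(gg (K+1)))⁻¹ := by
      rw [hθ, hE]
      exact inv2_le (gg_mono (by omega))
    have h8 : (0:ℝ) ≤ ((2:ℝ)^(gg (K+1)))⁻¹ := by positivity
    have h7 : Rr - ρ + S K ≤ 4 * ((2:ℝ)^(gg (K+1)))⁻¹ := by
      linarith only [h3, h4, h6, h8]
    have h9 := mul_le_mul_of_nonneg_left h7 (le_of_lt h5)
    linarith only [h9]
  have hαub : ∀ K, 1 ≤ K → K ≤ t →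
      (aZ K:ℝ) + 2^(gg K) * ρ ≤ 2^(gg K) * (2*(Wn:ℝ)) := by
    intro K h1 h2
    rw [hacast K h1 h2]
    have h3 : S K ≤ S 0 := hSsub K
    have h5 : (0:ℝ) < (2:ℝ)^(gg K) := by positivity
    have h6 : Rr + S K ≤ (Wn:ℝ) := by rw [hRrdef]; linarith only [hSsub K]
    have e7 := mul_le_mul_of_nonneg_left h6 (le_of_lt h5)
    have e8 := mul_le_mul_of_nonneg_left hρWn (le_of_lt h5)
    linarith only [e7, e8]
  have hαpos : ∀ K, 1 ≤ K → K ≤ t → (0:ℝ) < (aZ K:ℝ) + 2^(gg K) * ρ := by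
    intro K h1 h2
    rw [hacast K h1 h2]
    have h4 : (0:ℝ) ≤ S K := hSnn K
    have h5 : (0:ℝ) < (2:ℝ)^(gg K) := by positivity
    nlinarith only [h4, h5, hρpos, hRr1, hWn20]
  have hδpos : ∀ K, 1 ≤ K → K ≤ t → (0:ℝ) < (aZ K:ℝ) - 2^(gg K) * ρ := by
    intro K h1 h2
    have := hδlb K h1 h2
    have h5 : (0:ℝ) < (2:ℝ)^(gg K) := by positivity
    nlinarith only [this, h5, hθpos]
  set α : Fin t → Zsqrtd D := fun k => ⟨aZ (k.1+1), 2^(gg (k.1+1))⟩ with hα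
  have hαre : ∀ k : Fin t, ((α k).re : ℝ) = (aZ (k.1+1) : ℝ) := fun k => rfl
  have hαim : ∀ k : Fin t, ((α k).im : ℝ) = (2:ℝ)^(gg (k.1+1)) := by
    intro k
    show (((2:ℤ)^(gg (k.1+1)) : ℤ) : ℝ) = (2:ℝ)^(gg (k.1+1))
    push_cast; ring
  have hαtot : ∀ k : Fin t, TotPos D (α k) := by
    intro k
    have h1 : 1 ≤ k.1+1 := by omega
    have h2 : k.1+1 ≤ t := by omega
    constructor
    · rw [hαre, hαim, ← hρdef]
      exact hαpos _ h1 h2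
    · rw [hαre, hαim, ← hρdef]
      exact hδpos _ h1 h2
  -- the key Diophantine rigidity
  have Hcore : ∀ iK jK : ℕ, 1 ≤ iK → iK < jK → jK ≤ t → ∀ β : Zsqrtd D,
      ((β.re:ℝ) + (β.im:ℝ) * ρ)^2
        ≤ 4 * (((aZ iK:ℝ) + 2^(gg iK) * ρ) * ((aZ jK:ℝ) + 2^(gg jK) * ρ)) →
      ((β.re:ℝ) - (β.im:ℝ) * ρ)^2
        ≤ 4 * (((aZ iK:ℝ) - 2^(gg iK) * ρ) * ((aZ jK:ℝ) - 2^(gg jK) * ρ)) →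
      β = 0 := by
    intro iK jK h1i hij hjt β hb1 hb2
    have h1j : 1 ≤ jK := by omega
    have hit : iK ≤ t := by omega
    have hPi : (0:ℝ) < (2:ℝ)^(gg iK) := by positivity
    have hPj : (0:ℝ) < (2:ℝ)^(gg jK) := by positivity
    have hPi1 : (1:ℝ) ≤ (2:ℝ)^(gg iK) := one_le_pow₀ one_le_two
    have hPj1 : (1:ℝ) ≤ (2:ℝ)^(gg jK) := one_le_pow₀ one_le_two
    -- upper bound from the plus embedding
    have hu1 : ((β.re:ℝ) + (β.im:ℝ)*ρ)^2
        ≤ 16 * ((2:ℝ)^(gg iK) * (2:ℝ)^(gg jK)) * (Wn:ℝ)^2 := by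
      have e1 := hαub iK h1i hit
      have e2 := hαub jK h1j hjt
      have p2 := hαpos jK h1j hjt
      have e3 : ((aZ iK:ℝ) + 2^(gg iK)*ρ) * ((aZ jK:ℝ) + 2^(gg jK)*ρ)
          ≤ (2^(gg iK) * (2*(Wn:ℝ))) * (2^(gg jK) * (2*(Wn:ℝ))) :=
        mul_le_mul e1 e2 (le_of_lt p2) (by positivity)
      calc ((β.re:ℝ) + (β.im:ℝ)*ρ)^2
          ≤ 4 * (((aZ iK:ℝ) + 2^(gg iK)*ρ) * ((aZ jK:ℝ) + 2^(gg jK)*ρ)) := hb1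
        _ ≤ 4 * ((2^(gg iK) * (2*(Wn:ℝ))) * (2^(gg jK) * (2*(Wn:ℝ)))) := by
            linarith only [e3]
        _ = 16 * ((2:ℝ)^(gg iK) * (2:ℝ)^(gg jK)) * (Wn:ℝ)^2 := by ring
    -- upper bound from the minus embedding
    have hu2 : ((β.re:ℝ) - (β.im:ℝ)*ρ)^2 ≤ (((2:ℝ)^(gg jK + 4))⁻¹)^2 := by
      have e1 := hδub iK h1i hit
      have e2 := hδub jK h1j hjt
      have p2 := hδpos jK h1j hjt
      have e3 : ((aZ iK:ℝ) - 2^(gg iK)*ρ) * ((aZ jK:ℝ) - 2^(gg jK)*ρ)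
          ≤ (2^(gg iK) * (4*((2:ℝ)^(gg (iK+1)))⁻¹)) * (2^(gg jK) * (4*((2:ℝ)^(gg (jK+1)))⁻¹)) :=
        mul_le_mul e1 e2 (le_of_lt p2) (by positivity)
      have e4 : (2:ℝ)^(gg iK) * ((2:ℝ)^(gg (iK+1)))⁻¹ ≤ ((2:ℝ)^(3 * gg iK))⁻¹ :=
        pow2_mul_inv_le (by rw [gg_succ]; omega)
      have e5 : (2:ℝ)^(gg jK) * ((2:ℝ)^(gg (jK+1)))⁻¹ ≤ ((2:ℝ)^(3 * gg jK))⁻¹ :=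
        pow2_mul_inv_le (by rw [gg_succ]; omega)
      have e6 : ((2:ℝ)^(3*gg iK))⁻¹ * ((2:ℝ)^(3*gg jK))⁻¹ = ((2:ℝ)^(3*gg iK + 3*gg jK))⁻¹ := by
        rw [pow_add, mul_inv]
      have e7 : (64:ℝ) * ((2:ℝ)^(3*gg iK + 3*gg jK))⁻¹ ≤ (((2:ℝ)^(gg jK + 4))⁻¹)^2 := by
        have hh : (((2:ℝ)^(gg jK + 4))⁻¹)^2 = ((2:ℝ)^((gg jK + 4)*2))⁻¹ := by
          rw [inv_pow, ← pow_mul]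
        rw [hh, show (64:ℝ) = 2^(6:ℕ) by norm_num]
        exact pow2_mul_inv_le (by have := gg_pos iK; have := gg_pos jK; omega)
      have e8 : (2:ℝ)^(gg iK) * ((2:ℝ)^(gg (iK+1)))⁻¹ * ((2:ℝ)^(gg jK) * ((2:ℝ)^(gg (jK+1)))⁻¹)
          ≤ ((2:ℝ)^(3*gg iK))⁻¹ * ((2:ℝ)^(3*gg jK))⁻¹ :=
        mul_le_mul e4 e5 (by positivity) (by positivity)
      calc ((β.re:ℝ) - (β.im:ℝ)*ρ)^2
          ≤ 4 * (((aZ iK:ℝ) - 2^(gg iK)*ρ) * ((aZ jK:ℝ) - 2^(gg jK)*ρ)) := hb2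
        _ ≤ 4 * ((2^(gg iK) * (4*((2:ℝ)^(gg (iK+1)))⁻¹)) * (2^(gg jK) * (4*((2:ℝ)^(gg (jK+1)))⁻¹))) := by
            linarith only [e3]
        _ = 64 * ((2:ℝ)^(gg iK) * ((2:ℝ)^(gg (iK+1)))⁻¹ * ((2:ℝ)^(gg jK) * ((2:ℝ)^(gg (jK+1)))⁻¹)) := by
            ring
        _ ≤ 64 * (((2:ℝ)^(3*gg iK))⁻¹ * ((2:ℝ)^(3*gg jK))⁻¹) := by linarith only [e8]
        _ = 64 * ((2:ℝ)^(3*gg iK + 3*gg jK))⁻¹ := by rw [e6]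
        _ ≤ (((2:ℝ)^(gg jK + 4))⁻¹)^2 := e7
    have habs2 : |(β.re:ℝ) - (β.im:ℝ)*ρ| ≤ ((2:ℝ)^(gg jK + 4))⁻¹ :=
      abs_le_of_sq hu2 (by positivity)
    -- the imaginary part is small
    have hbsq : ((β.im:ℝ))^2 ≤ 33 * ((2:ℝ)^(gg iK) * (2:ℝ)^(gg jK)) := by
      have hid : (2*(β.im:ℝ)*ρ)^2
          = 2*((β.re:ℝ) + (β.im:ℝ)*ρ)^2 + 2*((β.re:ℝ) - (β.im:ℝ)*ρ)^2 - (2*(β.re:ℝ))^2 := by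
        ring
      have h2b : (2*(β.im:ℝ)*ρ)^2
          ≤ 2*((β.re:ℝ) + (β.im:ℝ)*ρ)^2 + 2*((β.re:ℝ) - (β.im:ℝ)*ρ)^2 := by
        rw [hid]
        have := sq_nonneg (2*(β.re:ℝ))
        linarith only [this]
      have hinv1 : (((2:ℝ)^(gg jK + 4))⁻¹)^2 ≤ 1 := by
        have h1 : ((2:ℝ)^(gg jK + 4))⁻¹ ≤ 1 := inv_le_one_of_one_le₀ (one_le_pow₀ one_le_two)
        have h0 : (0:ℝ) ≤ ((2:ℝ)^(gg jK + 4))⁻¹ := by positivity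
        calc (((2:ℝ)^(gg jK + 4))⁻¹)^2 ≤ 1^2 := pow_le_pow_left₀ h0 h1 2
          _ = 1 := one_pow 2
      have hDlo2 : ((Wn:ℝ)-2)^2 ≤ ρ^2 := pow_le_pow_left₀ (by linarith) hWρ 2
      have hid2 : (2*(β.im:ℝ)*ρ)^2 = 4*(β.im:ℝ)^2*ρ^2 := by ring
      have hc0 : 4*(β.im:ℝ)^2*((Wn:ℝ)-2)^2 ≤ 4*(β.im:ℝ)^2*ρ^2 :=
        mul_le_mul_of_nonneg_left hDlo2 (by positivity)
      have hmain : 4*((β.im:ℝ))^2*((Wn:ℝ)-2)^2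
          ≤ 32*((2:ℝ)^(gg iK)*(2:ℝ)^(gg jK))*(Wn:ℝ)^2 + 2 := by
        have hub2 : ((β.re:ℝ) - (β.im:ℝ)*ρ)^2 ≤ 1 := le_trans hu2 hinv1
        rw [← hid2] at hc0
        linarith only [hc0, h2b, hu1, hub2]
      have hW9 : (9:ℝ)/10*(Wn:ℝ) ≤ (Wn:ℝ) - 2 := by linarith only [hWn20]
      have hsq9 : (81/100)*(Wn:ℝ)^2 ≤ ((Wn:ℝ)-2)^2 := by
        nlinarith only [mul_nonneg (show (0:ℝ) ≤ (Wn:ℝ) - 20 by linarith)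
          (show (0:ℝ) ≤ 19*(Wn:ℝ) - 20 by linarith)]
      have hPP : (1:ℝ) ≤ (2:ℝ)^(gg iK)*(2:ℝ)^(gg jK) := by
        have := mul_le_mul hPi1 hPj1 (by norm_num) (by positivity)
        linarith only [this]
      have hWsq : (400:ℝ) ≤ (Wn:ℝ)^2 := by
        nlinarith only [mul_nonneg (show (0:ℝ) ≤ (Wn:ℝ) - 20 by linarith)
          (show (0:ℝ) ≤ (Wn:ℝ) + 20 by linarith)]
      have hPW : (400:ℝ) ≤ ((2:ℝ)^(gg iK)*(2:ℝ)^(gg jK))*(Wn:ℝ)^2 := by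
        have := mul_le_mul hPP hWsq (by norm_num) (by positivity)
        linarith only [this]
      have hc1 : 4*(β.im:ℝ)^2*((81/100)*(Wn:ℝ)^2) ≤ 4*(β.im:ℝ)^2*((Wn:ℝ)-2)^2 :=
        mul_le_mul_of_nonneg_left hsq9 (by positivity)
      have hc3 : (β.im:ℝ)^2*(Wn:ℝ)^2 ≤ (33*((2:ℝ)^(gg iK)*(2:ℝ)^(gg jK)))*(Wn:ℝ)^2 := by
        linarith [hc1, hmain, hPW]
      exact le_of_mul_le_mul_right hc3 (by positivity)
    have h33 : (33:ℝ)*((2:ℝ)^(gg iK)) < ((2:ℝ)^(gg jK)) := by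
      have h64 : (64:ℝ)*(2:ℝ)^(gg iK) ≤ (2:ℝ)^(gg jK) := by
        rw [show (64:ℝ) = 2^(6:ℕ) by norm_num, ← pow_add]
        apply pow2_le
        have hbar : gg (iK+1) ≤ gg jK := gg_mono (by omega)
        rw [gg_succ] at hbar
        have := gg_pos iK; omega
      linarith only [h64, hPi]
    have habsb : |(β.im:ℝ)| < (2:ℝ)^(gg jK) := by
      by_contra hcon
      push_neg at hcon
      have h1 : ((2:ℝ)^(gg jK))^2 ≤ |(β.im:ℝ)|^2 := by
        nlinarith only [hcon, hPj, abs_nonneg ((β.im:ℝ))]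
      rw [sq_abs] at h1
      nlinarith only [h1, hbsq, h33, hPj]
    by_cases him0 : β.im = 0
    · -- then also the real part vanishes
      have hb0 : ((β.im:ℝ)) = 0 := by exact_mod_cast him0
      have hA1 : |(β.re:ℝ)| < 1 := by
        rw [hb0, zero_mul, sub_zero] at habs2
        have hlt : ((2:ℝ)^(gg jK + 4))⁻¹ < 1 := by
          rw [inv_lt_one_iff₀]
          right
          calc (1:ℝ) < 2^(1:ℕ) := by norm_num
            _ ≤ 2^(gg jK + 4) := pow2_le (by omega)
        linarith only [habs2, hlt]
      have hre0 : β.re = 0 := by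
        have h9 : |β.re| < 1 := by
          exact_mod_cast (by push_cast; exact hA1 : (|β.re|:ℝ) < 1)
        rcases abs_lt.mp h9 with ⟨h10, h11⟩
        omega
      have : β = ⟨0, 0⟩ := by
        cases β
        simp_all
      rw [this]
      rfl
    · -- impossible : Diophantine rigidity
      exfalso
      set T : ℤ := ∑ ν ∈ Finset.Ioc 0 jK, 2^(gg jK - gg ν) with hT
      clear_value T
      have hTodd : Odd T := by
        obtain ⟨j', rfl⟩ : ∃ j', jK = j' + 1 := ⟨jK - 1, by omega⟩
        rw [hT, Finset.sum_Ioc_succ_top (Nat.zero_le j')]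
        have hz : gg (j'+1) - gg (j'+1) = 0 := by omega
        rw [hz, pow_zero]
        refine Even.add_one ?_
        have h2d : (2:ℤ) ∣ ∑ ν ∈ Finset.Ioc 0 j', 2 ^ (gg (j'+1) - gg ν) := by
          refine Finset.dvd_sum fun ν hν => ?_
          rw [Finset.mem_Ioc] at hν
          have hgap := gg_gap (show ν ≤ j' + 1 by omega)
          exact dvd_pow_self 2 (by omega)
        obtain ⟨q, hq⟩ := h2d
        exact ⟨q, by linarith only [hq]⟩
      obtain ⟨kT, hkT⟩ := hTodd
      have hcop : IsCoprime ((2:ℤ)^(gg jK)) T :=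
        IsCoprime.pow_left ⟨-kT, 1, by rw [hkT]; ring⟩
      have hbint : |β.im| < 2^(gg jK) := by
        have h1 : (|β.im| : ℝ) < ((2^(gg jK) : ℤ) : ℝ) := by push_cast; exact habsb
        exact_mod_cast h1
      have hdvd : ¬ ((2:ℤ)^(gg jK) ∣ β.im * T) := by
        intro hdd
        have h1 : (2:ℤ)^(gg jK) ∣ β.im := hcop.dvd_of_dvd_mul_right hdd
        have h2 : (2:ℤ)^(gg jK) ≤ |β.im| := Int.le_of_dvd (abs_pos.mpr him0) ((dvd_abs _ _).mpr h1)
        linarith only [h2, hbint]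
      set N : ℤ := (β.re - β.im * (Wn:ℤ)) * 2^(gg jK) + β.im * T with hN
      clear_value N
      have hN0 : N ≠ 0 := by
        intro h0
        apply hdvd
        refine ⟨β.im * (Wn:ℤ) - β.re, ?_⟩
        rw [hN] at h0
        linear_combination h0
      have hN1 : (1:ℝ) ≤ |(N:ℝ)| := by
        have h1 : (1:ℤ) ≤ |N| := Int.one_le_abs hN0
        have h2 : ((1:ℤ):ℝ) ≤ ((|N|:ℤ):ℝ) := by exact_mod_cast h1
        rwa [Int.cast_abs, Int.cast_one] at h2
      have hTcast : ((T:ℤ):ℝ) = 2^(gg jK) * ∑ ν ∈ Finset.Ioc 0 jK, ((2:ℝ)^(gg ν))⁻¹ := by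
        rw [hT]; exact hsumcast jK
      have hSsplit : (∑ ν ∈ Finset.Ioc 0 jK, ((2:ℝ)^(gg ν))⁻¹) + S jK = S 0 := by
        simp only [hS]
        exact Finset.sum_Ioc_consecutive _ (Nat.zero_le jK) hjt
      have hkey : (β.re:ℝ) - (β.im:ℝ) * Rr = (N:ℝ) * ((2:ℝ)^(gg jK))⁻¹ + (β.im:ℝ) * S jK := by
        have hcastN : (N:ℝ) = ((β.re:ℝ) - (β.im:ℝ)*(Wn:ℝ)) * 2^(gg jK) + (β.im:ℝ) * ((T:ℤ):ℝ) := by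
          rw [hN]; push_cast; ring
        rw [hcastN, hTcast, hRrdef,
          show (∑ ν ∈ Finset.Ioc 0 jK, ((2:ℝ)^(gg ν))⁻¹) = S 0 - S jK by
            linarith only [hSsplit]]
        field_simp
        ring
      -- lower bound for |βre - βim * Rr|
      have hNP : ((2:ℝ)^(gg jK))⁻¹ ≤ |(N:ℝ) * ((2:ℝ)^(gg jK))⁻¹| := by
        rw [abs_mul, abs_of_nonneg (show (0:ℝ) ≤ ((2:ℝ)^(gg jK))⁻¹ by positivity)]
        nlinarith only [hN1, inv_pos.mpr hPj]
      have hSjb : |(β.im:ℝ) * S jK| ≤ ((2:ℝ)^(gg jK + 2))⁻¹ := by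
        have h1 : |(β.im:ℝ) * S jK| = |(β.im:ℝ)| * S jK := by
          rw [abs_mul, abs_of_nonneg (hSnn jK)]
        have h2 : |(β.im:ℝ)| * S jK ≤ 2^(gg jK) * (2 * ((2:ℝ)^(gg (jK+1)))⁻¹) :=
          mul_le_mul (le_of_lt habsb) (hSle jK) (hSnn jK) (le_of_lt hPj)
        have h3 : (2:ℝ)^(gg jK) * (2 * ((2:ℝ)^(gg (jK+1)))⁻¹)
            = 2^(gg jK + 1) * ((2:ℝ)^(gg (jK+1)))⁻¹ := by rw [pow_succ]; ring
        have h4 : (2:ℝ)^(gg jK + 1) * ((2:ℝ)^(gg (jK+1)))⁻¹ ≤ ((2:ℝ)^(gg jK + 2))⁻¹ :=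
          pow2_mul_inv_le (by rw [gg_succ]; have := gg_pos jK; omega)
        rw [h1]
        linarith only [h2, h3, h4]
      have htri : |(N:ℝ)*((2:ℝ)^(gg jK))⁻¹| - |(β.im:ℝ)*S jK|
          ≤ |(N:ℝ)*((2:ℝ)^(gg jK))⁻¹ + (β.im:ℝ)*S jK| := by
        have h5 := abs_add_le ((N:ℝ)*((2:ℝ)^(gg jK))⁻¹ + (β.im:ℝ)*S jK) (-((β.im:ℝ)*S jK))
        rw [add_neg_cancel_right, abs_neg] at h5
        linarith only [h5]
      have hlow : ((2:ℝ)^(gg jK))⁻¹ - ((2:ℝ)^(gg jK + 2))⁻¹ ≤ |(β.re:ℝ) - (β.im:ℝ)*Rr| := by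
        rw [hkey]
        linarith only [hNP, hSjb, htri]
      -- transfer from Rr to ρ
      have hbθ : |(β.im:ℝ)*(Rr - ρ)| ≤ ((2:ℝ)^(gg jK + 3))⁻¹ := by
        have h1 : |(β.im:ℝ)*(Rr - ρ)| = |(β.im:ℝ)| * |Rr - ρ| := abs_mul _ _
        have h2 : |Rr - ρ| ≤ θ := by
          rw [abs_of_nonneg (by linarith)]
          linarith
        have h3 : |(β.im:ℝ)| * |Rr - ρ| ≤ 2^(gg jK) * θ := by
          refine mul_le_mul (le_of_lt habsb) h2 (abs_nonneg _) (le_of_lt hPj)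
        have h4 : (2:ℝ)^(gg jK) * θ ≤ ((2:ℝ)^(gg jK + 3))⁻¹ := by
          rw [hθ, hE]
          refine pow2_mul_inv_le ?_
          have hg1 : gg (jK+1) ≤ gg (t+1) := gg_mono (by omega)
          rw [gg_succ] at hg1
          have := gg_pos jK
          omega
        rw [h1]
        linarith only [h3, h4]
      have htri2 : |(β.re:ℝ) - (β.im:ℝ)*Rr| - |(β.im:ℝ)*(Rr - ρ)|
          ≤ |(β.re:ℝ) - (β.im:ℝ)*ρ| := by
        have h5 := abs_add_le ((β.re:ℝ) - (β.im:ℝ)*ρ) (-((β.im:ℝ)*(Rr - ρ)))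
        have h6 : (β.re:ℝ) - (β.im:ℝ)*ρ + -((β.im:ℝ)*(Rr - ρ)) = (β.re:ℝ) - (β.im:ℝ)*Rr := by
          ring
        rw [h6, abs_neg] at h5
        linarith only [h5]
      -- final numeric contradiction
      have ec : ∀ cc : ℕ, ((2:ℝ)^(gg jK + cc))⁻¹ = ((2:ℝ)^(gg jK))⁻¹ * ((2:ℝ)^cc)⁻¹ := by
        intro cc; rw [pow_add, mul_inv]
      have hx : (0:ℝ) < ((2:ℝ)^(gg jK))⁻¹ := by positivity
      rw [ec 2] at hlow
      rw [ec 3] at hbθ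
      rw [ec 4] at habs2
      norm_num at hlow hbθ habs2
      linarith only [hlow, hbθ, habs2, htri2, hx, abs_mul (β.im:ℝ) (Rr - ρ)]
  refine ⟨D, hD2, hDnsq, hDmod, ?_⟩
  intro r c hu
  have hH : ∀ k l : Fin t, k ≠ l → ∀ β : Zsqrtd D,
      ((β.re:ℝ) + (β.im:ℝ) * Real.sqrt ((D:ℤ):ℝ))^2
        ≤ 4 * ((((α k).re:ℝ) + ((α k).im:ℝ) * Real.sqrt ((D:ℤ):ℝ))
            * (((α l).re:ℝ) + ((α l).im:ℝ) * Real.sqrt ((D:ℤ):ℝ))) →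
      ((β.re:ℝ) - (β.im:ℝ) * Real.sqrt ((D:ℤ):ℝ))^2
        ≤ 4 * ((((α k).re:ℝ) - ((α k).im:ℝ) * Real.sqrt ((D:ℤ):ℝ))
            * (((α l).re:ℝ) - ((α l).im:ℝ) * Real.sqrt ((D:ℤ):ℝ))) →
      β = 0 := by
    intro k l hkl β h1 h2
    rw [← hρdef] at h1 h2
    simp only [hαre, hαim] at h1 h2
    have hne : k.1 ≠ l.1 := fun h => hkl (Fin.ext h)
    rcases Nat.lt_or_ge k.1 l.1 with hlt | hge
    · exact Hcore (k.1+1) (l.1+1) (by omega) (by omega) (by omega) β h1 h2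
    · have hlt : l.1 < k.1 := by omega
      refine Hcore (l.1+1) (k.1+1) (by omega) (by omega) (by omega) β ?_ ?_
      · rw [mul_comm (((aZ (l.1+1)):ℝ) + 2 ^ gg (l.1+1) * ρ)]
        exact h1
      · rw [mul_comm (((aZ (l.1+1)):ℝ) - 2 ^ gg (l.1+1) * ρ)]
        exact h2
  have htr : t ≤ r := rank_lower_bound D hD0 c hu α hαtot hH
  have h1 : (s:ℤ) ≤ (s.toNat:ℤ) := Int.self_le_toNat s
  have h2 : ((t:ℕ):ℤ) ≤ (r:ℤ) := by exact_mod_cast htr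
  rw [ht] at h2
  push_cast at h2
  omega
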